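/- arXiv:1710.08308 — 2 statements merged into one kernel-verified Lean document; each statement's English description precedes it below -/
import Mathlib

section
/- Lemma 2 (tubal-sampling cross-term bound). Let δ > 0, suppose m ≥ 4·(n₁B_∞/B)·log(1/δ), and define β := (1 + 2√(log(1/δ)))². Then with probability at least 1 − δ, ‖Σ_{k=1}^m A_{Ω(k)}ᴴ b_{Ω(k)}‖₂² ≤ β·(m·c²·n₂·μ/n₁²)·B. -/
open Matrix
open scoped BigOperators

section Aux

private lemma exp_le_one_add_add_sq {x : ℝ} (hx : |x| ≤ 1) : Real.exp x ≤ 1 + x + x ^ 2 := by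
  have h := Real.exp_bound hx (n := 2) (by norm_num)
  have h1 : ∑ m ∈ Finset.range 2, x ^ m / m.factorial = 1 + x := by
    simp [Finset.sum_range_succ]
  rw [h1] at h
  have h2 := (abs_le.mp h).2
  have h4 : |x| ^ 2 * ((Nat.succ 2 : ℝ) / ((Nat.factorial 2 : ℝ) * (2 : ℕ))) = x ^ 2 * (3 / 4) := by
    rw [sq_abs]; norm_num [Nat.factorial]
  rw [h4] at h2
  nlinarith [sq_nonneg x]

variable {α : Type*} [Fintype α]

private lemma sum_fun_succ {M : Type*} [AddCommMonoid M] {m : ℕ} (f : (Fin (m + 1) → α) → M) :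
    ∑ ω : Fin (m + 1) → α, f ω = ∑ a : α, ∑ ω : Fin m → α, f (Fin.cons a ω) := by
  calc ∑ ω : Fin (m + 1) → α, f ω
      = ∑ p : α × (Fin m → α), f (Fin.cons p.1 p.2) :=
        (Fintype.sum_equiv (Fin.consEquiv fun _ => α) _ _ (fun p => by simp [Fin.consEquiv])).symm
    _ = ∑ a : α, ∑ ω : Fin m → α, f (Fin.cons a ω) :=
        Fintype.sum_prod_type (f := fun p : α × (Fin m → α) => f (Fin.cons p.1 p.2))

variable {E : Type*} [NormedAddCommGroup E] [InnerProductSpace ℂ E]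

private lemma cons_sum {m : ℕ} (v : α → E) (a : α) (ω : Fin m → α) :
    ∑ k : Fin (m + 1), v ((Fin.cons a ω : Fin (m + 1) → α) k) = v a + ∑ k, v (ω k) := by
  simp [Fin.sum_univ_succ]

/-- The plain (unnormalized) expected norm. -/
private noncomputable def Hsum (v : α → E) (m : ℕ) (s : E) : ℝ :=
  ∑ ω : Fin m → α, ‖s + ∑ k, v (ω k)‖

private lemma Hsum_zero (v : α → E) (s : E) : Hsum v 0 s = ‖s‖ := by
  simp [Hsum]

private lemma Hsum_succ (v : α → E) (m : ℕ) (s : E) :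
    Hsum v (m + 1) s = ∑ a : α, Hsum v m (s + v a) := by
  rw [Hsum, sum_fun_succ]
  refine Finset.sum_congr rfl fun a _ => Finset.sum_congr rfl fun ω _ => ?_
  rw [cons_sum, ← add_assoc]

private lemma Hsum_nonneg (v : α → E) (m : ℕ) (s : E) : 0 ≤ Hsum v m s :=
  Finset.sum_nonneg fun _ _ => norm_nonneg _

private lemma card_fun_space (m : ℕ) :
    (Fintype.card (Fin m → α) : ℝ) = (Fintype.card α : ℝ) ^ m := by
  rw [Fintype.card_fun, Fintype.card_fin]; push_cast; rfl

private lemma Hsum_lip (v : α → E) (m : ℕ) (x y : E) :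
    |Hsum v m x - Hsum v m y| ≤ (Fintype.card α : ℝ) ^ m * ‖x - y‖ := by
  rw [Hsum, Hsum, ← Finset.sum_sub_distrib]
  calc |∑ ω : Fin m → α, (‖x + ∑ k, v (ω k)‖ - ‖y + ∑ k, v (ω k)‖)|
      ≤ ∑ ω : Fin m → α, |‖x + ∑ k, v (ω k)‖ - ‖y + ∑ k, v (ω k)‖| :=
        Finset.abs_sum_le_sum_abs _ _
    _ ≤ ∑ _ω : Fin m → α, ‖x - y‖ := by
        refine Finset.sum_le_sum fun ω _ => ?_
        have := abs_norm_sub_norm_le (x + ∑ k, v (ω k)) (y + ∑ k, v (ω k))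
        simpa using this
    _ = (Fintype.card α : ℝ) ^ m * ‖x - y‖ := by
        rw [Finset.sum_const, Finset.card_univ, nsmul_eq_mul, card_fun_space]

/-- Second moment bound. -/
private lemma moment2 (v : α → E) (hv0 : ∑ a, v a = 0) (V : ℝ)
    (hV : ∑ a, ‖v a‖ ^ 2 ≤ (Fintype.card α : ℝ) * V) :
    ∀ (m : ℕ) (s : E),
      ∑ ω : Fin m → α, ‖s + ∑ k, v (ω k)‖ ^ 2 ≤
        (Fintype.card α : ℝ) ^ m * (‖s‖ ^ 2 + m * V) := by
  intro m
  induction m with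
  | zero => intro s; simp
  | succ m ih =>
    intro s
    have hexp : ∑ a, ‖s + v a‖ ^ 2 ≤ (Fintype.card α : ℝ) * (‖s‖ ^ 2 + V) := by
      have h1 : ∀ a : α, ‖s + v a‖ ^ 2
          = ‖s‖ ^ 2 + 2 * Complex.re (inner ℂ s (v a)) + ‖v a‖ ^ 2 := fun a =>
        norm_add_sq (𝕜 := ℂ) s (v a)
      have h2 : ∑ a, Complex.re (inner ℂ s (v a) : ℂ) = 0 := by
        rw [← Complex.re_sum, ← inner_sum, hv0, inner_zero_right]; simp
      calc ∑ a, ‖s + v a‖ ^ 2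
          = (Fintype.card α : ℝ) * ‖s‖ ^ 2 + 2 * ∑ a, Complex.re (inner ℂ s (v a) : ℂ)
              + ∑ a, ‖v a‖ ^ 2 := by
            simp_rw [h1, Finset.sum_add_distrib, Finset.sum_const, Finset.card_univ,
              nsmul_eq_mul, ← Finset.mul_sum]
        _ ≤ (Fintype.card α : ℝ) * ‖s‖ ^ 2 + 0 + (Fintype.card α : ℝ) * V := by
            rw [h2]; push_cast; linarith
        _ = (Fintype.card α : ℝ) * (‖s‖ ^ 2 + V) := by ring
    have hcard : (0:ℝ) ≤ (Fintype.card α : ℝ) ^ m := by positivity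
    calc ∑ ω : Fin (m + 1) → α, ‖s + ∑ k, v (ω k)‖ ^ 2
        = ∑ a : α, ∑ ω : Fin m → α, ‖(s + v a) + ∑ k, v (ω k)‖ ^ 2 := by
          rw [sum_fun_succ]
          exact Finset.sum_congr rfl fun a _ => Finset.sum_congr rfl fun ω _ => by
            rw [cons_sum, ← add_assoc]
      _ ≤ ∑ a : α, (Fintype.card α : ℝ) ^ m * (‖s + v a‖ ^ 2 + m * V) :=
          Finset.sum_le_sum fun a _ => ih (s + v a)
      _ = (Fintype.card α : ℝ) ^ m * (∑ a, ‖s + v a‖ ^ 2 + (Fintype.card α : ℝ) * (m * V)) := by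
          rw [← Finset.mul_sum, Finset.sum_add_distrib, Finset.sum_const, Finset.card_univ,
            nsmul_eq_mul]
      _ ≤ (Fintype.card α : ℝ) ^ m *
            ((Fintype.card α : ℝ) * (‖s‖ ^ 2 + V) + (Fintype.card α : ℝ) * (m * V)) := by
          exact mul_le_mul_of_nonneg_left (by linarith) hcard
      _ = (Fintype.card α : ℝ) ^ (m + 1) * (‖s‖ ^ 2 + (↑(m + 1) : ℝ) * V) := by
          push_cast; ring

variable [Nonempty α]

private lemma card_pos : (0:ℝ) < (Fintype.card α : ℝ) := by
  exact_mod_cast Fintype.card_pos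

/-- One-step MGF bound. -/
private lemma onestep (g : α → ℝ) (g₀ R V θ : ℝ) (hθ : 0 ≤ θ) (hθR : θ * (2 * R) ≤ 1)
    (w : α → ℝ) (hw : ∀ a, |g a - g₀| ≤ w a) (hwR : ∀ a, w a ≤ R)
    (hw2 : ∑ a, w a ^ 2 ≤ (Fintype.card α : ℝ) * V) :
    ∑ a, Real.exp (θ * g a) ≤
      (Fintype.card α : ℝ) *
        Real.exp (θ * ((∑ a, g a) / (Fintype.card α : ℝ)) + θ ^ 2 * V) := by
  have hn : (0:ℝ) < (Fintype.card α : ℝ) := card_pos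
  set n : ℝ := (Fintype.card α : ℝ) with hn'
  set G : ℝ := (∑ a, g a) / n with hG
  have hsumG : ∑ a, (g a - G) = 0 := by
    rw [Finset.sum_sub_distrib, Finset.sum_const, Finset.card_univ, nsmul_eq_mul, hG]
    field_simp
    rw [← hn']; ring
  have hR0 : 0 ≤ R := by
    obtain ⟨a⟩ := ‹Nonempty α›
    exact le_trans (le_trans (abs_nonneg _) (hw a)) (hwR a)
  have hGg : |G - g₀| ≤ R := by
    have hEq : G - g₀ = (∑ a, (g a - g₀)) / n := by
      rw [Finset.sum_sub_distrib, Finset.sum_const, Finset.card_univ, nsmul_eq_mul, hG]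
      field_simp
      rw [← hn']; ring
    rw [hEq, abs_div, abs_of_pos hn, div_le_iff₀ hn]
    calc |∑ a, (g a - g₀)| ≤ ∑ a, |g a - g₀| := Finset.abs_sum_le_sum_abs _ _
      _ ≤ ∑ _a : α, R := Finset.sum_le_sum fun a _ => (hw a).trans (hwR a)
      _ = R * n := by rw [Finset.sum_const, Finset.card_univ, nsmul_eq_mul]; ring
  have habs : ∀ a, |g a - G| ≤ 2 * R := by
    intro a
    calc |g a - G| = |(g a - g₀) - (G - g₀)| := by ring_nf
      _ ≤ |g a - g₀| + |G - g₀| := abs_sub _ _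
      _ ≤ R + R := add_le_add ((hw a).trans (hwR a)) hGg
      _ = 2 * R := by ring
  have hvar : ∑ a, (g a - G) ^ 2 ≤ n * V := by
    have key : ∑ a, (g a - g₀) ^ 2
        = ∑ a, (g a - G) ^ 2 + 2 * (G - g₀) * ∑ a, (g a - G) + n * (G - g₀) ^ 2 := by
      have h1 : ∀ a : α, (g a - g₀) ^ 2
          = (g a - G) ^ 2 + 2 * (G - g₀) * (g a - G) + (G - g₀) ^ 2 := fun a => by ring
      simp_rw [h1, Finset.sum_add_distrib, Finset.sum_const, Finset.card_univ, nsmul_eq_mul,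
        ← Finset.mul_sum]
      rw [← hn']
    have h3 : ∑ a, (g a - g₀) ^ 2 ≤ ∑ a, w a ^ 2 := by
      refine Finset.sum_le_sum fun a _ => ?_
      have := hw a
      nlinarith [abs_nonneg (g a - g₀), sq_abs (g a - g₀)]
    rw [hsumG] at key
    nlinarith [sq_nonneg (G - g₀)]
  have hx1 : ∀ a, |θ * (g a - G)| ≤ 1 := by
    intro a
    rw [abs_mul, abs_of_nonneg hθ]
    calc θ * |g a - G| ≤ θ * (2 * R) := mul_le_mul_of_nonneg_left (habs a) hθ
      _ ≤ 1 := hθR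
  have hmain : ∑ a, Real.exp (θ * (g a - G)) ≤ n * (1 + θ ^ 2 * V) := by
    calc ∑ a, Real.exp (θ * (g a - G))
        ≤ ∑ a, (1 + θ * (g a - G) + (θ * (g a - G)) ^ 2) :=
          Finset.sum_le_sum fun a _ => exp_le_one_add_add_sq (hx1 a)
      _ = n + θ * ∑ a, (g a - G) + θ ^ 2 * ∑ a, (g a - G) ^ 2 := by
          simp_rw [mul_pow, Finset.sum_add_distrib, Finset.sum_const, Finset.card_univ,
            nsmul_eq_mul, ← Finset.mul_sum]
          ring
      _ = n + θ ^ 2 * ∑ a, (g a - G) ^ 2 := by rw [hsumG]; ring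
      _ ≤ n + θ ^ 2 * (n * V) := by nlinarith [sq_nonneg θ]
      _ = n * (1 + θ ^ 2 * V) := by ring
  calc ∑ a, Real.exp (θ * g a)
      = Real.exp (θ * G) * ∑ a, Real.exp (θ * (g a - G)) := by
        rw [Finset.mul_sum]
        refine Finset.sum_congr rfl fun a _ => ?_
        rw [← Real.exp_add]; ring_nf
    _ ≤ Real.exp (θ * G) * (n * (1 + θ ^ 2 * V)) :=
        mul_le_mul_of_nonneg_left hmain (Real.exp_pos _).le
    _ ≤ Real.exp (θ * G) * (n * Real.exp (θ ^ 2 * V)) := by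
        have h5 : 1 + θ ^ 2 * V ≤ Real.exp (θ ^ 2 * V) := by
          linarith [Real.add_one_le_exp (θ ^ 2 * V)]
        gcongr
    _ = n * Real.exp (θ * G + θ ^ 2 * V) := by rw [Real.exp_add]; ring

/-- MGF bound for the norm of the sum. -/
private lemma mgf_bound (v : α → E) (hv0 : ∑ a, v a = 0) (R V θ : ℝ) (hθ : 0 ≤ θ)
    (hR : ∀ a, ‖v a‖ ≤ R) (hV : ∑ a, ‖v a‖ ^ 2 ≤ (Fintype.card α : ℝ) * V)
    (hθR : θ * (2 * R) ≤ 1) :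
    ∀ (m : ℕ) (s : E),
      ∑ ω : Fin m → α, Real.exp (θ * ‖s + ∑ k, v (ω k)‖) ≤
        (Fintype.card α : ℝ) ^ m *
          Real.exp (θ * (Hsum v m s / (Fintype.card α : ℝ) ^ m) + θ ^ 2 * m * V) := by
  have hn : (0:ℝ) < (Fintype.card α : ℝ) := card_pos
  intro m
  induction m with
  | zero => intro s; simp [Hsum_zero]
  | succ m ih =>
    intro s
    have hnm : (0:ℝ) < (Fintype.card α : ℝ) ^ m := by positivity
    calc ∑ ω : Fin (m + 1) → α, Real.exp (θ * ‖s + ∑ k, v (ω k)‖)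
        = ∑ a : α, ∑ ω : Fin m → α, Real.exp (θ * ‖(s + v a) + ∑ k, v (ω k)‖) := by
          rw [sum_fun_succ]
          exact Finset.sum_congr rfl fun a _ => Finset.sum_congr rfl fun ω _ => by
            rw [cons_sum, ← add_assoc]
      _ ≤ ∑ a : α, (Fintype.card α : ℝ) ^ m *
            Real.exp (θ * (Hsum v m (s + v a) / (Fintype.card α : ℝ) ^ m) + θ ^ 2 * m * V) :=
          Finset.sum_le_sum fun a _ => ih (s + v a)
      _ = (Fintype.card α : ℝ) ^ m * Real.exp (θ ^ 2 * m * V) *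
            ∑ a : α, Real.exp (θ * (Hsum v m (s + v a) / (Fintype.card α : ℝ) ^ m)) := by
          rw [Finset.mul_sum]
          refine Finset.sum_congr rfl fun a _ => ?_
          rw [Real.exp_add]; ring
      _ ≤ (Fintype.card α : ℝ) ^ m * Real.exp (θ ^ 2 * m * V) *
            ((Fintype.card α : ℝ) *
              Real.exp (θ * ((∑ a, Hsum v m (s + v a) / (Fintype.card α : ℝ) ^ m) /
                  (Fintype.card α : ℝ)) + θ ^ 2 * V)) := by
          refine mul_le_mul_of_nonneg_left ?_ (by positivity)
          refine onestep _ (Hsum v m s / (Fintype.card α : ℝ) ^ m) R V θ hθ hθR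
            (fun a => ‖v a‖) (fun a => ?_) hR hV
          have hl := Hsum_lip v m (s + v a) s
          have h6 : (s + v a) - s = v a := by abel
          rw [h6] at hl
          rw [div_sub_div_same, abs_div, abs_of_pos hnm, div_le_iff₀ hnm]
          linarith [hl]
      _ = (Fintype.card α : ℝ) ^ (m + 1) *
            Real.exp (θ * (Hsum v (m + 1) s / (Fintype.card α : ℝ) ^ (m + 1)) +
              θ ^ 2 * (↑(m + 1) : ℝ) * V) := by
          rw [Hsum_succ]
          have h7 : (∑ a, Hsum v m (s + v a) / (Fintype.card α : ℝ) ^ m) /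
              (Fintype.card α : ℝ)
              = (∑ a, Hsum v m (s + v a)) / (Fintype.card α : ℝ) ^ (m + 1) := by
            rw [← Finset.sum_div, div_div, ← pow_succ]
          rw [h7]
          have h8 : θ * ((∑ a, Hsum v m (s + v a)) / (Fintype.card α : ℝ) ^ (m + 1)) +
              θ ^ 2 * (↑(m + 1) : ℝ) * V
              = (θ * ((∑ a, Hsum v m (s + v a)) / (Fintype.card α : ℝ) ^ (m + 1)) + θ ^ 2 * V)
                + θ ^ 2 * (m : ℝ) * V := by push_cast; ring
          rw [h8]
          simp only [Real.exp_add]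
          ring
  done

/-- Bernstein-type counting bound. -/
private lemma bernstein_count (v : α → E) (hv0 : ∑ a, v a = 0) (R V : ℝ)
    (hR : ∀ a, ‖v a‖ ≤ R) (hV : ∑ a, ‖v a‖ ^ 2 ≤ (Fintype.card α : ℝ) * V)
    (m : ℕ) (σ t : ℝ) (hσ : 0 < σ) (ht : 0 ≤ t)
    (hmV : (m : ℝ) * V ≤ σ ^ 2) (htR : t * R ≤ σ ^ 2) :
    ((Finset.univ.filter fun ω : Fin m → α => σ + t ≤ ‖∑ k, v (ω k)‖).card : ℝ)
      ≤ (Fintype.card α : ℝ) ^ m * Real.exp (-(t ^ 2 / (4 * σ ^ 2))) := by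
  classical
  have hn : (0:ℝ) < (Fintype.card α : ℝ) := card_pos
  have hσ2 : (0:ℝ) < σ ^ 2 := by positivity
  have hV0 : 0 ≤ V := by
    have h1 : (0:ℝ) ≤ ∑ a, ‖v a‖ ^ 2 := Finset.sum_nonneg fun a _ => sq_nonneg _
    nlinarith
  set θ : ℝ := t / (2 * σ ^ 2) with hθdef
  have hθ : 0 ≤ θ := by positivity
  have hθR : θ * (2 * R) ≤ 1 := by
    rw [hθdef]
    rw [div_mul_eq_mul_div, div_le_one (by positivity)]
    linarith
  -- expected norm bound
  have hHbar : Hsum v m 0 ≤ (Fintype.card α : ℝ) ^ m * σ := by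
    have hcs := sq_sum_le_card_mul_sum_sq
      (s := (Finset.univ : Finset (Fin m → α))) (f := fun ω => ‖(0:E) + ∑ k, v (ω k)‖)
    have hm2 := moment2 v hv0 V hV m 0
    have hHdef : Hsum v m 0 = ∑ ω : Fin m → α, ‖(0:E) + ∑ k, v (ω k)‖ := rfl
    have hcard : ((Finset.univ : Finset (Fin m → α)).card : ℝ) = (Fintype.card α : ℝ) ^ m := by
      rw [Finset.card_univ]; exact card_fun_space m
    have hsq : (Hsum v m 0) ^ 2 ≤ ((Fintype.card α : ℝ) ^ m * σ) ^ 2 := by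
      rw [hHdef]
      calc (∑ ω : Fin m → α, ‖(0:E) + ∑ k, v (ω k)‖) ^ 2
          ≤ ((Finset.univ : Finset (Fin m → α)).card : ℝ) *
              ∑ ω : Fin m → α, ‖(0:E) + ∑ k, v (ω k)‖ ^ 2 := by exact_mod_cast hcs
        _ ≤ (Fintype.card α : ℝ) ^ m * ((Fintype.card α : ℝ) ^ m * (‖(0:E)‖ ^ 2 + m * V)) := by
            rw [hcard]
            exact mul_le_mul_of_nonneg_left hm2 (by positivity)
        _ ≤ ((Fintype.card α : ℝ) ^ m * σ) ^ 2 := by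
            simp only [norm_zero]
            have : (0:ℝ) ≤ (Fintype.card α : ℝ) ^ m := by positivity
            nlinarith
    have h0 : 0 ≤ Hsum v m 0 := Hsum_nonneg v m 0
    have hb : 0 ≤ (Fintype.card α : ℝ) ^ m * σ := by positivity
    calc Hsum v m 0 = Real.sqrt ((Hsum v m 0) ^ 2) := (Real.sqrt_sq h0).symm
      _ ≤ Real.sqrt (((Fintype.card α : ℝ) ^ m * σ) ^ 2) := Real.sqrt_le_sqrt hsq
      _ = (Fintype.card α : ℝ) ^ m * σ := Real.sqrt_sq hb
  have hmgf := mgf_bound v hv0 R V θ hθ hR hV hθR m 0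
  -- Markov/Chernoff step
  have hmarkov : ((Finset.univ.filter
        fun ω : Fin m → α => σ + t ≤ ‖∑ k, v (ω k)‖).card : ℝ)
      ≤ ∑ ω : Fin m → α, Real.exp (θ * ‖(0:E) + ∑ k, v (ω k)‖ - θ * (σ + t)) := by
    rw [Finset.card_filter]
    push_cast
    rw [← Finset.sum_filter]
    refine le_trans (Finset.sum_le_sum ?_)
      (Finset.sum_le_sum_of_subset_of_nonneg (Finset.filter_subset _ _)
        (fun ω _ _ => (Real.exp_pos _).le))
    intro ω hω
    rw [Finset.mem_filter] at hω
    have h8 : 0 ≤ θ * ‖(0:E) + ∑ k, v (ω k)‖ - θ * (σ + t) := by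
      rw [zero_add]
      have := mul_le_mul_of_nonneg_left hω.2 hθ
      linarith
    exact Real.one_le_exp h8
  have hsum : ∑ ω : Fin m → α, Real.exp (θ * ‖(0:E) + ∑ k, v (ω k)‖ - θ * (σ + t))
      ≤ (Fintype.card α : ℝ) ^ m * Real.exp (-(t ^ 2 / (4 * σ ^ 2))) := by
    have hfac : ∀ ω : Fin m → α,
        Real.exp (θ * ‖(0:E) + ∑ k, v (ω k)‖ - θ * (σ + t))
          = Real.exp (θ * ‖(0:E) + ∑ k, v (ω k)‖) * Real.exp (-(θ * (σ + t))) := by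
      intro ω; rw [← Real.exp_add]; ring_nf
    simp_rw [hfac, ← Finset.sum_mul]
    have hbound : (∑ ω : Fin m → α, Real.exp (θ * ‖(0:E) + ∑ k, v (ω k)‖))
        * Real.exp (-(θ * (σ + t)))
        ≤ ((Fintype.card α : ℝ) ^ m *
            Real.exp (θ * (Hsum v m 0 / (Fintype.card α : ℝ) ^ m) + θ ^ 2 * m * V))
          * Real.exp (-(θ * (σ + t))) :=
      mul_le_mul_of_nonneg_right hmgf (Real.exp_pos _).le
    refine hbound.trans ?_
    rw [mul_assoc, ← Real.exp_add]
    refine mul_le_mul_of_nonneg_left (Real.exp_le_exp.mpr ?_) (by positivity)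
    have hHb : Hsum v m 0 / (Fintype.card α : ℝ) ^ m ≤ σ := by
      rw [div_le_iff₀ (by positivity)]
      linarith [hHbar]
    have h9 : θ * (Hsum v m 0 / (Fintype.card α : ℝ) ^ m) ≤ θ * σ :=
      mul_le_mul_of_nonneg_left hHb hθ
    have h10 : θ ^ 2 * m * V ≤ θ ^ 2 * σ ^ 2 := by
      have : (0:ℝ) ≤ θ ^ 2 := sq_nonneg θ
      nlinarith
    have h11 : θ * σ + θ ^ 2 * σ ^ 2 + -(θ * (σ + t)) = -(t ^ 2 / (4 * σ ^ 2)) := by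
      rw [hθdef]; field_simp; ring
    linarith [h9, h10, h11.le, h11.ge]
  exact hmarkov.trans hsum

end Aux

set_option maxHeartbeats 1600000

/-- **Lemma 2 (tubal-sampling cross-term bound).**
Sampling with replacement is modeled by the uniform distribution on the finite
sample space `Fin m → Fin n₁`, probabilities being `#(event) / n₁ ^ m`. -/
theorem tubal_sampling_cross_term_bound
    (n₁ n₂ n₃ m : ℕ) (hn₁ : 0 < n₁) (hn₂ : 0 < n₂) (hn₃ : 0 < n₃) (hm : 0 < m)
    (c μ δ : ℝ) (hc : 0 < c) (hμ : 1 ≤ μ) (hδ : 0 < δ)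
    (A : Fin n₁ → Matrix (Fin n₃) (Fin (n₂ * n₃)) ℂ)
    (hA : ∑ j, (A j)ᴴ * A j = 1)
    (hAF : ∀ j, ∑ i, ∑ l, ‖A j i l‖ ^ 2 ≤ c ^ 2 * n₂ * μ / n₁)
    (b : Fin n₁ → Fin n₃ → ℂ)
    (hb : ∃ j, b j ≠ 0)
    (horth : ∑ j, (A j)ᴴ *ᵥ b j = 0)
    (B Bmax : ℝ)
    (hB : B = ∑ j, ∑ i, ‖b j i‖ ^ 2)
    (hBmax : IsGreatest (Set.range fun j => ∑ i, ‖b j i‖ ^ 2) Bmax)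
    (hsize : 4 * (n₁ * Bmax / B) * Real.log (1 / δ) ≤ m)
    (β : ℝ)
    (hβ : β = (1 + 2 * Real.sqrt (Real.log (1 / δ))) ^ 2) :
    1 - δ ≤
      (Set.ncard {ω : Fin m → Fin n₁ |
        ∑ l, ‖(∑ k, (A (ω k))ᴴ *ᵥ b (ω k)) l‖ ^ 2 ≤
          β * (m * c ^ 2 * n₂ * μ / (n₁ : ℝ) ^ 2) * B} : ℝ) / (n₁ : ℝ) ^ m := by
  classical
  haveI : Nonempty (Fin n₁) := Fin.pos_iff_nonempty.mp hn₁
  have hn₁R : (0:ℝ) < (n₁ : ℝ) := by exact_mod_cast hn₁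
  have hpow : (0:ℝ) < (n₁ : ℝ) ^ m := by positivity
  -- trivial case δ ≥ 1
  by_cases hδ1 : 1 ≤ δ
  · have h0 : (0:ℝ) ≤ (Set.ncard {ω : Fin m → Fin n₁ |
        ∑ l, ‖(∑ k, (A (ω k))ᴴ *ᵥ b (ω k)) l‖ ^ 2 ≤
          β * (m * c ^ 2 * n₂ * μ / (n₁ : ℝ) ^ 2) * B} : ℝ) / (n₁ : ℝ) ^ m := by
      positivity
    linarith
  push_neg at hδ1
  have hμ0 : (0:ℝ) < μ := lt_of_lt_of_le one_pos hμ
  have hn₂R : (0:ℝ) < (n₂ : ℝ) := by exact_mod_cast hn₂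
  have hmR : (0:ℝ) < (m : ℝ) := by exact_mod_cast hm
  set L : ℝ := Real.log (1 / δ) with hLdef
  have hL0 : 0 ≤ L := Real.log_nonneg (by rw [le_div_iff₀ hδ]; linarith)
  set v : Fin n₁ → EuclideanSpace ℂ (Fin (n₂ * n₃)) :=
    fun j => (WithLp.equiv 2 (Fin (n₂ * n₃) → ℂ)).symm ((A j)ᴴ *ᵥ b j) with hvdef
  have hbterm_nonneg : ∀ j, (0:ℝ) ≤ ∑ i, ‖b j i‖ ^ 2 :=
    fun j => Finset.sum_nonneg fun i _ => sq_nonneg _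
  obtain ⟨j₀, hj₀⟩ := hb
  have hj₀pos : 0 < ∑ i, ‖b j₀ i‖ ^ 2 := by
    rcases Function.ne_iff.mp hj₀ with ⟨i₀, hi₀⟩
    exact Finset.sum_pos' (fun i _ => sq_nonneg _)
      ⟨i₀, Finset.mem_univ _, pow_pos (norm_pos_iff.mpr hi₀) 2⟩
  have hB0 : 0 < B := by
    rw [hB]
    calc (0:ℝ) < ∑ i, ‖b j₀ i‖ ^ 2 := hj₀pos
      _ ≤ ∑ j, ∑ i, ‖b j i‖ ^ 2 :=
        Finset.single_le_sum (fun j _ => hbterm_nonneg j) (Finset.mem_univ j₀)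
  have hBmax_ge : ∀ j, ∑ i, ‖b j i‖ ^ 2 ≤ Bmax := fun j => hBmax.2 ⟨j, rfl⟩
  have hBmax0 : 0 < Bmax := lt_of_lt_of_le hj₀pos (hBmax_ge j₀)
  set V : ℝ := c ^ 2 * n₂ * μ * B / (n₁:ℝ) ^ 2 with hVdef
  have hV0 : 0 < V := by rw [hVdef]; positivity
  set R : ℝ := Real.sqrt (c ^ 2 * n₂ * μ * Bmax / n₁) with hRdef
  set σ : ℝ := Real.sqrt ((m:ℝ) * V) with hσdef
  have hσ0 : 0 < σ := Real.sqrt_pos.mpr (by positivity)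
  have hσsq : σ ^ 2 = (m:ℝ) * V := Real.sq_sqrt (by positivity)
  have hR2 : R ^ 2 = c ^ 2 * n₂ * μ * Bmax / n₁ := Real.sq_sqrt (by positivity)
  set t : ℝ := 2 * Real.sqrt L * σ with htdef
  have ht0 : 0 ≤ t := by rw [htdef]; positivity
  clear_value L V R σ t
  have hR0 : 0 ≤ R := by rw [hRdef]; exact Real.sqrt_nonneg _
  -- norm identities
  have hvnorm2 : ∀ j, ‖v j‖ ^ 2 = ∑ l, ‖((A j)ᴴ *ᵥ b j) l‖ ^ 2 := by
    intro j
    rw [EuclideanSpace.norm_eq, Real.sq_sqrt (Finset.sum_nonneg fun l _ => sq_nonneg _)]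
    rfl
  have hSnorm2 : ∀ ω : Fin m → Fin n₁,
      ‖∑ k, v (ω k)‖ ^ 2 = ∑ l, ‖(∑ k, (A (ω k))ᴴ *ᵥ b (ω k)) l‖ ^ 2 := by
    intro ω
    rw [EuclideanSpace.norm_eq, Real.sq_sqrt (Finset.sum_nonneg fun l _ => sq_nonneg _)]
    refine Finset.sum_congr rfl fun l _ => ?_
    have h1 : (∑ k, v (ω k)) l = (∑ k, (A (ω k))ᴴ *ᵥ b (ω k)) l := by
      rw [WithLp.ofLp_sum, Finset.sum_apply l Finset.univ fun k => v (ω k),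
        Finset.sum_apply l Finset.univ fun k => (A (ω k))ᴴ *ᵥ b (ω k)]
      rfl
    rw [h1]
  -- Cauchy–Schwarz bound using the Frobenius assumption
  have hCS : ∀ j, ‖v j‖ ^ 2 ≤ c ^ 2 * n₂ * μ / n₁ * ∑ i, ‖b j i‖ ^ 2 := by
    intro j
    rw [hvnorm2 j]
    have hl : ∀ l, ‖((A j)ᴴ *ᵥ b j) l‖ ^ 2 ≤ (∑ i, ‖A j i l‖ ^ 2) * ∑ i, ‖b j i‖ ^ 2 := by
      intro l
      have h1 : ((A j)ᴴ *ᵥ b j) l = ∑ i, (starRingEnd ℂ) (A j i l) * b j i := by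
        simp [Matrix.mulVec, dotProduct, Matrix.conjTranspose_apply]
      have h2 : ‖((A j)ᴴ *ᵥ b j) l‖ ≤ ∑ i, ‖A j i l‖ * ‖b j i‖ := by
        rw [h1]
        refine (norm_sum_le _ _).trans ?_
        refine Finset.sum_le_sum fun i _ => ?_
        rw [norm_mul, RCLike.norm_conj]
      have h3 : (∑ i, ‖A j i l‖ * ‖b j i‖) ^ 2 ≤ (∑ i, ‖A j i l‖ ^ 2) * ∑ i, ‖b j i‖ ^ 2 :=
        Finset.sum_mul_sq_le_sq_mul_sq _ _ _
      have h5 : ‖((A j)ᴴ *ᵥ b j) l‖ ^ 2 ≤ (∑ i, ‖A j i l‖ * ‖b j i‖) ^ 2 :=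
        pow_le_pow_left₀ (norm_nonneg _) h2 2
      exact h5.trans h3
    calc ∑ l, ‖((A j)ᴴ *ᵥ b j) l‖ ^ 2
        ≤ ∑ l, (∑ i, ‖A j i l‖ ^ 2) * ∑ i, ‖b j i‖ ^ 2 := Finset.sum_le_sum fun l _ => hl l
      _ = (∑ l, ∑ i, ‖A j i l‖ ^ 2) * ∑ i, ‖b j i‖ ^ 2 := by rw [Finset.sum_mul]
      _ ≤ c ^ 2 * n₂ * μ / n₁ * ∑ i, ‖b j i‖ ^ 2 := by
          refine mul_le_mul_of_nonneg_right ?_ (hbterm_nonneg j)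
          rw [Finset.sum_comm]; exact hAF j
  -- hypotheses for the Bernstein-type bound
  have hv0 : ∑ j, v j = 0 := by
    ext l
    have h1 : (∑ j, v j) l = (∑ j, (A j)ᴴ *ᵥ b j) l := by
      rw [WithLp.ofLp_sum, Finset.sum_apply l Finset.univ fun j => v j,
        Finset.sum_apply l Finset.univ fun j => (A j)ᴴ *ᵥ b j]
      rfl
    rw [h1, horth, WithLp.ofLp_zero]
  have hRb : ∀ j, ‖v j‖ ≤ R := by
    intro j
    have h1 : ‖v j‖ ^ 2 ≤ R ^ 2 := by
      rw [hR2]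
      refine (hCS j).trans ?_
      calc c ^ 2 * n₂ * μ / n₁ * ∑ i, ‖b j i‖ ^ 2
          ≤ c ^ 2 * n₂ * μ / n₁ * Bmax :=
            mul_le_mul_of_nonneg_left (hBmax_ge j) (by positivity)
        _ = c ^ 2 * n₂ * μ * Bmax / n₁ := by ring
    have h2 : 0 ≤ R := hR0
    calc ‖v j‖ = Real.sqrt (‖v j‖ ^ 2) := (Real.sqrt_sq (norm_nonneg _)).symm
      _ ≤ Real.sqrt (R ^ 2) := Real.sqrt_le_sqrt h1
      _ = R := Real.sqrt_sq h2
  have hVsum : ∑ j, ‖v j‖ ^ 2 ≤ (Fintype.card (Fin n₁) : ℝ) * V := by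
    rw [Fintype.card_fin]
    calc ∑ j, ‖v j‖ ^ 2
        ≤ ∑ j, (c ^ 2 * n₂ * μ / n₁ * ∑ i, ‖b j i‖ ^ 2) := Finset.sum_le_sum fun j _ => hCS j
      _ = c ^ 2 * n₂ * μ / n₁ * B := by rw [← Finset.mul_sum, hB]
      _ = (n₁:ℝ) * V := by rw [hVdef]; field_simp
  have hmV : (m:ℝ) * V ≤ σ ^ 2 := hσsq.ge
  have hsize4 : 4 * (n₁:ℝ) * Bmax * L ≤ (m:ℝ) * B := by
    have h1 := mul_le_mul_of_nonneg_right hsize hB0.le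
    have e := div_mul_cancel₀ ((n₁:ℝ) * Bmax) hB0.ne'
    calc 4 * (n₁:ℝ) * Bmax * L = 4 * ((n₁:ℝ) * Bmax / B * B) * L := by rw [e]; ring
      _ = 4 * ((n₁:ℝ) * Bmax / B) * L * B := by ring
      _ ≤ (m:ℝ) * B := h1
  have htR : t * R ≤ σ ^ 2 := by
    have hsq : (2 * Real.sqrt L * R) ^ 2 ≤ σ ^ 2 := by
      have h2 : (2 * Real.sqrt L * R) ^ 2 = 4 * L * (c ^ 2 * n₂ * μ * Bmax / n₁) := by
        rw [mul_pow, mul_pow, Real.sq_sqrt hL0, hR2]; ring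
      rw [h2, hσsq, hVdef]
      have h3 : (0:ℝ) ≤ c ^ 2 * (n₂:ℝ) * μ := by positivity
      have h4 := mul_le_mul_of_nonneg_left hsize4 h3
      have h6 := mul_le_mul_of_nonneg_right h4 hn₁R.le
      have e1 : 4 * L * (c ^ 2 * (n₂:ℝ) * μ * Bmax / (n₁:ℝ))
          = 4 * L * (c ^ 2 * (n₂:ℝ) * μ) * Bmax / (n₁:ℝ) := by ring
      have e2 : (m:ℝ) * (c ^ 2 * (n₂:ℝ) * μ * B / (n₁:ℝ) ^ 2)
          = (m:ℝ) * (c ^ 2 * (n₂:ℝ) * μ) * B / (n₁:ℝ) ^ 2 := by ring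
      rw [e1, e2, div_le_div_iff₀ hn₁R (by positivity)]
      calc 4 * L * (c ^ 2 * (n₂:ℝ) * μ) * Bmax * (n₁:ℝ) ^ 2
          = (c ^ 2 * (n₂:ℝ) * μ * (4 * (n₁:ℝ) * Bmax * L)) * (n₁:ℝ) := by ring
        _ ≤ (c ^ 2 * (n₂:ℝ) * μ * ((m:ℝ) * B)) * (n₁:ℝ) := h6
        _ = (m:ℝ) * (c ^ 2 * (n₂:ℝ) * μ) * B * (n₁:ℝ) := by ring
    have h5 : 2 * Real.sqrt L * R ≤ σ := by
      have ha : 0 ≤ 2 * Real.sqrt L * R :=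
        mul_nonneg (mul_nonneg (by norm_num) (Real.sqrt_nonneg _)) hR0
      calc 2 * Real.sqrt L * R = Real.sqrt ((2 * Real.sqrt L * R) ^ 2) :=
            (Real.sqrt_sq ha).symm
        _ ≤ Real.sqrt (σ ^ 2) := Real.sqrt_le_sqrt hsq
        _ = σ := Real.sqrt_sq hσ0.le
    calc t * R = (2 * Real.sqrt L * R) * σ := by rw [htdef]; ring
      _ ≤ σ * σ := mul_le_mul_of_nonneg_right h5 hσ0.le
      _ = σ ^ 2 := by ring
  -- Bernstein bound
  have hcount := bernstein_count v hv0 R V hRb hVsum m σ t hσ0 ht0 hmV htR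
  rw [Fintype.card_fin] at hcount
  have hexp : Real.exp (-(t ^ 2 / (4 * σ ^ 2))) = δ := by
    have h1 : t ^ 2 = 4 * L * σ ^ 2 := by
      rw [htdef, mul_pow, mul_pow, Real.sq_sqrt hL0]; ring
    have h2 : -(t ^ 2 / (4 * σ ^ 2)) = -L := by
      rw [h1]; field_simp
    rw [h2, hLdef, one_div, Real.log_inv, neg_neg, Real.exp_log hδ]
  rw [hexp] at hcount
  -- relate the two events
  have hRHS : β * ((m:ℝ) * c ^ 2 * n₂ * μ / (n₁:ℝ) ^ 2) * B = (σ + t) ^ 2 := by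
    have h1 : σ + t = (1 + 2 * Real.sqrt L) * σ := by rw [htdef]; ring
    rw [h1, mul_pow, hσsq, hVdef, hβ, hLdef]
    ring
  have hincl : ∀ ω : Fin m → Fin n₁, ¬ (σ + t ≤ ‖∑ k, v (ω k)‖) →
      ∑ l, ‖(∑ k, (A (ω k))ᴴ *ᵥ b (ω k)) l‖ ^ 2 ≤
        β * (m * c ^ 2 * n₂ * μ / (n₁:ℝ) ^ 2) * B := by
    intro ω hω
    push_neg at hω
    rw [← hSnorm2 ω, hRHS]
    exact pow_le_pow_left₀ (norm_nonneg _) hω.le 2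
  -- counting
  classical
  set goodF : Finset (Fin m → Fin n₁) := Finset.univ.filter (fun ω =>
    ∑ l, ‖(∑ k, (A (ω k))ᴴ *ᵥ b (ω k)) l‖ ^ 2 ≤
      β * (m * c ^ 2 * n₂ * μ / (n₁:ℝ) ^ 2) * B) with hgoodF
  set badF : Finset (Fin m → Fin n₁) :=
    Finset.univ.filter (fun ω => σ + t ≤ ‖∑ k, v (ω k)‖) with hbadF
  have hsetF : {ω : Fin m → Fin n₁ |
      ∑ l, ‖(∑ k, (A (ω k))ᴴ *ᵥ b (ω k)) l‖ ^ 2 ≤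
        β * (m * c ^ 2 * n₂ * μ / (n₁:ℝ) ^ 2) * B} = (goodF : Set (Fin m → Fin n₁)) := by
    rw [hgoodF]; ext ω; simp
  rw [hsetF, Set.ncard_coe_finset]
  have hsubset : Finset.univ.filter (fun ω : Fin m → Fin n₁ =>
      ¬ (σ + t ≤ ‖∑ k, v (ω k)‖)) ⊆ goodF := by
    intro ω hω
    rw [Finset.mem_filter] at hω
    rw [hgoodF, Finset.mem_filter]
    exact ⟨Finset.mem_univ _, hincl ω hω.2⟩
  have hcardeq : badF.card + (Finset.univ.filter (fun ω : Fin m → Fin n₁ =>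
      ¬ (σ + t ≤ ‖∑ k, v (ω k)‖))).card = n₁ ^ m := by
    rw [hbadF, Finset.card_filter_add_card_filter_not, Finset.card_univ,
      Fintype.card_fun, Fintype.card_fin, Fintype.card_fin]
  have hmono := Finset.card_le_card hsubset
  rw [le_div_iff₀ hpow]
  have h1 : (badF.card : ℝ) + ((Finset.univ.filter (fun ω : Fin m → Fin n₁ =>
      ¬ (σ + t ≤ ‖∑ k, v (ω k)‖))).card : ℝ) = (n₁:ℝ) ^ m := by
    exact_mod_cast hcardeq
  have h2 : ((Finset.univ.filter (fun ω : Fin m → Fin n₁ =>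
      ¬ (σ + t ≤ ‖∑ k, v (ω k)‖))).card : ℝ) ≤ (goodF.card : ℝ) := by
    exact_mod_cast hmono
  have h3 : (badF.card : ℝ) ≤ (n₁:ℝ) ^ m * δ := hcount
  have h4 : (1 - δ) * (n₁:ℝ) ^ m = (n₁:ℝ) ^ m - (n₁:ℝ) ^ m * δ := by ring
  rw [h4]
  linarith [h1, h2, h3]
end

section
/- Lemma 5 (elementwise cross-term bound). Let δ > 0, let y ∈ ℝ^N be nonzero with Uᵀy = 0, suppose m ≥ 4·(N‖y‖_∞²/‖y‖₂²)·log(1/δ), and define β := (1 + 2√(log(1/δ)))². Then with probability at least 1 − δ, ‖U_Ωᵀ y_Ω‖₂² ≤ β·(m·d·μ(S)/N²)·‖y‖₂². -/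
open Matrix
open scoped BigOperators

section CrossTermAux


lemma crossterm_euclid_sum_apply {d : Type*} [Fintype d] {ι : Type*} (s : Finset ι)
    (X : ι → EuclideanSpace ℝ d) (l : d) : (∑ a ∈ s, X a) l = ∑ a ∈ s, X a l := by
  classical
  induction s using Finset.induction with
  | empty => simp [PiLp.zero_apply]
  | insert _ _ h ih => rw [Finset.sum_insert h, Finset.sum_insert h, PiLp.add_apply, ih]

lemma crossterm_euclid_norm_sq {d : Type*} [Fintype d] (x : EuclideanSpace ℝ d) :
    ‖x‖ ^ 2 = ∑ l, (x l) ^ 2 := by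
  rw [EuclideanSpace.norm_eq, Real.sq_sqrt (by positivity)]
  simp [Real.norm_eq_abs, sq_abs]

lemma crossterm_centered_var {N : ℕ} (D : Fin N → ℝ) (h0 : ∑ a, D a = 0) :
    2 * (N : ℝ) * ∑ a, D a ^ 2 = ∑ a, ∑ b, (D a - D b) ^ 2 := by
  have expand : ∀ a b : Fin N, (D a - D b) ^ 2
      = D a ^ 2 - 2 * (D a * D b) + D b ^ 2 := fun a b => by ring
  simp only [expand, Finset.sum_add_distrib, Finset.sum_sub_distrib,
    ← Finset.mul_sum, ← Finset.sum_mul, h0]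
  simp only [Finset.sum_const, Finset.card_univ, Fintype.card_fin, nsmul_eq_mul,
    mul_zero, zero_mul, sub_zero]
  rw [← Finset.mul_sum]
  ring

lemma crossterm_pairwise_dist_sq {N : ℕ} {d : Type*} [Fintype d]
    (X : Fin N → EuclideanSpace ℝ d) (hX0 : ∑ a, X a = 0) :
    ∑ a, ∑ b, ‖X a - X b‖ ^ 2 = 2 * N * ∑ a, ‖X a‖ ^ 2 := by
  have h : ∀ a b : Fin N, ‖X a - X b‖ ^ 2
      = ‖X a‖ ^ 2 - 2 * (inner ℝ (X a) (X b) : ℝ) + ‖X b‖ ^ 2 :=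
    fun a b => norm_sub_sq_real _ _
  simp only [h, Finset.sum_add_distrib, Finset.sum_sub_distrib]
  have h2 : ∑ a, ∑ b, (2 : ℝ) * inner ℝ (X a) (X b) = 0 := by
    have : ∑ a, ∑ b : Fin N, (inner ℝ (X a) (X b) : ℝ)
        = (inner ℝ (∑ a, X a) (∑ b, X b) : ℝ) := by
      rw [sum_inner]
      exact Finset.sum_congr rfl fun a _ => (inner_sum _ _ _).symm
    simp only [← Finset.mul_sum, this, hX0, inner_zero_left, mul_zero]
  rw [h2]
  simp only [Finset.sum_const, Finset.card_univ, Fintype.card_fin, nsmul_eq_mul, sub_zero]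
  rw [← Finset.mul_sum]
  ring

/-- One-step mgf bound (Bennett-type, with the crude `3/4` constant coming from
`Real.exp_bound`). -/
lemma crossterm_one_step {N : ℕ} (hN : 0 < N) (φ : Fin N → ℝ) (ρ : Fin N → Fin N → ℝ)
    (l V : ℝ) (hl : 0 ≤ l)
    (hρ : ∀ a b, |φ a - φ b| ≤ ρ a b) (hρc : ∀ a b, l * ρ a b ≤ 1)
    (hV : ∑ a, ∑ b, (ρ a b) ^ 2 ≤ 2 * (N : ℝ) ^ 2 * V) :
    ∑ a, Real.exp (l * (φ a - (∑ b, φ b) / N)) ≤ N * Real.exp (3 / 4 * l ^ 2 * V) := by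
  have hNR : (0 : ℝ) < N := by exact_mod_cast hN
  set μ : ℝ := (∑ b, φ b) / N with hμ
  have hD1 : ∀ a, |l * (φ a - μ)| ≤ 1 := by
    intro a
    have h1 : φ a - μ = (∑ b, (φ a - φ b)) / N := by
      rw [Finset.sum_sub_distrib, Finset.sum_const, Finset.card_univ, Fintype.card_fin,
        nsmul_eq_mul, hμ]
      field_simp
    rw [abs_mul, abs_of_nonneg hl, h1, abs_div, abs_of_nonneg hNR.le, mul_div_assoc',
      div_le_one hNR]
    calc l * |∑ b, (φ a - φ b)| ≤ l * ∑ b, ρ a b := by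
          apply mul_le_mul_of_nonneg_left _ hl
          exact le_trans (Finset.abs_sum_le_sum_abs _ _)
            (Finset.sum_le_sum fun b _ => hρ a b)
      _ = ∑ b, l * ρ a b := by rw [Finset.mul_sum]
      _ ≤ ∑ _b : Fin N, (1 : ℝ) := Finset.sum_le_sum fun b _ => hρc a b
      _ = N := by simp
  have hpt : ∀ a, Real.exp (l * (φ a - μ)) ≤
      1 + l * (φ a - μ) + 3 / 4 * (l * (φ a - μ)) ^ 2 := by
    intro a
    have := Real.exp_bound (hD1 a) (n := 2) (by norm_num)
    have h2 : ∑ m ∈ Finset.range 2, (l * (φ a - μ)) ^ m / (m.factorial : ℝ)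
        = 1 + l * (φ a - μ) := by
      simp [Finset.sum_range_succ]
    rw [h2] at this
    have h3 : |l * (φ a - μ)| ^ 2 * (((2 : ℕ).succ : ℝ) / ((2 : ℕ).factorial * (2 : ℕ) : ℝ))
        = 3 / 4 * (l * (φ a - μ)) ^ 2 := by
      rw [sq_abs]; norm_num [Nat.factorial]; ring
    rw [h3] at this
    linarith [abs_le.mp this]
  have hsum0 : ∑ a, (φ a - μ) = 0 := by
    rw [Finset.sum_sub_distrib, Finset.sum_const, Finset.card_univ, Fintype.card_fin,
      nsmul_eq_mul, hμ]
    field_simp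
    ring
  have hvar : ∑ a, (φ a - μ) ^ 2 ≤ N * V := by
    have key := crossterm_centered_var (fun a => φ a - μ) hsum0
    have heq : ∀ a b : Fin N, ((φ a - μ) - (φ b - μ)) = φ a - φ b := fun a b => by ring
    simp only [heq] at key
    have hle : ∑ a, ∑ b, (φ a - φ b) ^ 2 ≤ 2 * (N : ℝ) ^ 2 * V := by
      refine le_trans (Finset.sum_le_sum fun a _ => Finset.sum_le_sum fun b _ => ?_) hV
      calc (φ a - φ b) ^ 2 = |φ a - φ b| ^ 2 := (sq_abs _).symm
        _ ≤ (ρ a b) ^ 2 := pow_le_pow_left₀ (abs_nonneg _) (hρ a b) 2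
    nlinarith [hle, key]
  have e3 : ∑ a, (3 / 4 * (l * (φ a - μ)) ^ 2) = 3 / 4 * l ^ 2 * ∑ a, (φ a - μ) ^ 2 := by
    simp only [show ∀ x : ℝ, 3 / 4 * (l * x) ^ 2 = 3 / 4 * l ^ 2 * x ^ 2 from fun x => by ring]
    rw [← Finset.mul_sum]
  calc ∑ a, Real.exp (l * (φ a - μ))
      ≤ ∑ a, (1 + l * (φ a - μ) + 3 / 4 * (l * (φ a - μ)) ^ 2) :=
        Finset.sum_le_sum fun a _ => hpt a
    _ = N + l * ∑ a, (φ a - μ) + 3 / 4 * l ^ 2 * ∑ a, (φ a - μ) ^ 2 := by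
        rw [Finset.sum_add_distrib, Finset.sum_add_distrib, e3, ← Finset.mul_sum]
        simp [Finset.sum_const, Finset.card_univ]
    _ = N + 3 / 4 * l ^ 2 * ∑ a, (φ a - μ) ^ 2 := by rw [hsum0]; ring
    _ ≤ N + 3 / 4 * l ^ 2 * (N * V) := by
        have h34 : (0 : ℝ) ≤ 3 / 4 * l ^ 2 := by positivity
        nlinarith [hvar, h34]
    _ = N * (1 + 3 / 4 * l ^ 2 * V) := by ring
    _ ≤ N * Real.exp (3 / 4 * l ^ 2 * V) := by
        apply mul_le_mul_of_nonneg_left _ hNR.le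
        linarith [Real.add_one_le_exp (3 / 4 * l ^ 2 * V)]

lemma crossterm_sum_cons_decomp {N n : ℕ} (g : (Fin (n + 1) → Fin N) → ℝ) :
    ∑ ω, g ω = ∑ i, ∑ ω', g (Fin.cons i ω') := by
  rw [← (Fin.consEquiv (fun _ => Fin N)).sum_comp g, Fintype.sum_prod_type]
  rfl

/-- Tensorized mgf bound for functions with the `ρ`-bounded-differences property. -/
lemma crossterm_mgf_bound {N : ℕ} (hN : 0 < N) (ρ : Fin N → Fin N → ℝ) (l V : ℝ) (hl : 0 ≤ l)
    (hρc : ∀ a b, l * ρ a b ≤ 1) (hV : ∑ a, ∑ b, (ρ a b) ^ 2 ≤ 2 * (N : ℝ) ^ 2 * V) :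
    ∀ (n : ℕ) (f : (Fin n → Fin N) → ℝ),
      (∀ (ω : Fin n → Fin N) (k : Fin n) (a b : Fin N),
        |f (Function.update ω k a) - f (Function.update ω k b)| ≤ ρ a b) →
      ∑ ω, Real.exp (l * (f ω - (∑ ω', f ω') / (N : ℝ) ^ n))
        ≤ (N : ℝ) ^ n * Real.exp (n * (3 / 4 * l ^ 2 * V)) := by
  have hNR : (0 : ℝ) < N := by exact_mod_cast hN
  intro n
  induction n with
  | zero =>
    intro f _
    simp
  | succ n ih =>
    intro f hf
    set K : ℝ := 3 / 4 * l ^ 2 * V with hK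
    set μ : ℝ := (∑ ω, f ω) / (N : ℝ) ^ (n + 1) with hμdef
    set F : (Fin n → Fin N) → ℝ := fun ω' => (∑ i, f (Fin.cons i ω')) / N with hFdef
    have hFsum : ∑ ω', F ω' = (∑ ω, f ω) / N := by
      rw [crossterm_sum_cons_decomp f, ← Finset.sum_div, Finset.sum_comm]
    have hμF : (∑ ω', F ω') / (N : ℝ) ^ n = μ := by
      rw [hFsum, hμdef, div_div, pow_succ]
      ring_nf
    have hFlip : ∀ (ω' : Fin n → Fin N) (k : Fin n) (a b : Fin N),
        |F (Function.update ω' k a) - F (Function.update ω' k b)| ≤ ρ a b := by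
      intro ω' k a b
      have h1 : F (Function.update ω' k a) - F (Function.update ω' k b)
          = (∑ i, (f (Fin.cons i (Function.update ω' k a))
              - f (Fin.cons i (Function.update ω' k b)))) / N := by
        rw [hFdef]
        rw [Finset.sum_sub_distrib, sub_div]
      rw [h1, abs_div, abs_of_nonneg hNR.le, div_le_iff₀ hNR]
      calc |∑ i, (f (Fin.cons i (Function.update ω' k a))
              - f (Fin.cons i (Function.update ω' k b)))|
          ≤ ∑ i, |f (Fin.cons i (Function.update ω' k a))
              - f (Fin.cons i (Function.update ω' k b))| :=
            Finset.abs_sum_le_sum_abs _ _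
        _ ≤ ∑ _i : Fin N, ρ a b := by
            refine Finset.sum_le_sum fun i _ => ?_
            rw [Fin.cons_update, Fin.cons_update]
            exact hf _ k.succ a b
        _ = ρ a b * N := by simp [mul_comm]
    have hinner : ∀ ω' : Fin n → Fin N,
        ∑ i, Real.exp (l * (f (Fin.cons i ω') - F ω')) ≤ N * Real.exp K := by
      intro ω'
      have hpair : ∀ a b : Fin N,
          |f (Fin.cons a ω') - f (Fin.cons b ω')| ≤ ρ a b := by
        intro a b
        have := hf (Fin.cons b ω') 0 a b
        simpa [Fin.update_cons_zero] using this
      exact crossterm_one_step hN (fun i => f (Fin.cons i ω')) ρ l V hl hpair hρc hV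
    calc ∑ ω, Real.exp (l * (f ω - μ))
        = ∑ ω', ∑ i, Real.exp (l * (f (Fin.cons i ω') - μ)) := by
          rw [crossterm_sum_cons_decomp (fun ω => Real.exp (l * (f ω - μ))), Finset.sum_comm]
      _ = ∑ ω', Real.exp (l * (F ω' - μ)) * ∑ i, Real.exp (l * (f (Fin.cons i ω') - F ω')) := by
          refine Finset.sum_congr rfl fun ω' _ => ?_
          rw [Finset.mul_sum]
          refine Finset.sum_congr rfl fun i _ => ?_
          rw [← Real.exp_add]
          congr 1
          ring
      _ ≤ ∑ ω', Real.exp (l * (F ω' - μ)) * (N * Real.exp K) := by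
          refine Finset.sum_le_sum fun ω' _ => ?_
          exact mul_le_mul_of_nonneg_left (hinner ω') (Real.exp_nonneg _)
      _ = (N * Real.exp K) * ∑ ω', Real.exp (l * (F ω' - μ)) := by
          rw [← Finset.sum_mul]; ring
      _ ≤ (N * Real.exp K) * ((N : ℝ) ^ n * Real.exp (n * K)) := by
          refine mul_le_mul_of_nonneg_left ?_ (by positivity)
          have := ih F hFlip
          rwa [hμF] at this
      _ = (N : ℝ) ^ (n + 1) * Real.exp ((n + 1 : ℕ) * K) := by
          rw [pow_succ]
          push_cast
          rw [add_mul, one_mul, Real.exp_add]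
          ring

/-- Second moment identity for sums of i.i.d. centered vectors. -/
lemma crossterm_second_moment {N : ℕ} {d : Type*} [Fintype d] (hN : 0 < N)
    (X : Fin N → EuclideanSpace ℝ d) (hX0 : ∑ a, X a = 0) :
    ∀ (n : ℕ) (w : EuclideanSpace ℝ d),
      ∑ ω : Fin n → Fin N, ‖w + ∑ k, X (ω k)‖ ^ 2
        = (N : ℝ) ^ n * (‖w‖ ^ 2 + n * ((∑ a, ‖X a‖ ^ 2) / N)) := by
  have hNR : (0 : ℝ) < N := by exact_mod_cast hN
  intro n
  induction n with
  | zero => intro w; simp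
  | succ n ih =>
    intro w
    rw [crossterm_sum_cons_decomp (fun ω => ‖w + ∑ k, X (ω k)‖ ^ 2)]
    have hsplit : ∀ (i : Fin N) (ω' : Fin n → Fin N),
        w + ∑ k : Fin (n + 1), X ((Fin.cons i ω' : Fin (n + 1) → Fin N) k)
          = (w + X i) + ∑ k : Fin n, X (ω' k) := by
      intro i ω'
      rw [Fin.sum_univ_succ]
      simp only [Fin.cons_zero, Fin.cons_succ]
      abel
    calc ∑ i, ∑ ω' : Fin n → Fin N,
          ‖w + ∑ k : Fin (n + 1), X ((Fin.cons i ω' : Fin (n + 1) → Fin N) k)‖ ^ 2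
        = ∑ i, ((N : ℝ) ^ n * (‖w + X i‖ ^ 2 + n * ((∑ a, ‖X a‖ ^ 2) / N))) := by
          refine Finset.sum_congr rfl fun i _ => ?_
          rw [show (fun ω' : Fin n → Fin N =>
              ‖w + ∑ k : Fin (n + 1), X ((Fin.cons i ω' : Fin (n + 1) → Fin N) k)‖ ^ 2)
              = fun ω' => ‖(w + X i) + ∑ k : Fin n, X (ω' k)‖ ^ 2 from funext fun ω' => by
                rw [hsplit i ω']]
          exact ih (w + X i)
      _ = (N : ℝ) ^ n * (∑ i, ‖w + X i‖ ^ 2 + N * (n * ((∑ a, ‖X a‖ ^ 2) / N))) := by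
          rw [← Finset.mul_sum, Finset.sum_add_distrib]
          simp [Finset.sum_const, Finset.card_univ]
      _ = (N : ℝ) ^ (n + 1) * (‖w‖ ^ 2 + (n + 1 : ℕ) * ((∑ a, ‖X a‖ ^ 2) / N)) := by
          have hexp : ∑ i, ‖w + X i‖ ^ 2 = N * ‖w‖ ^ 2 + ∑ a, ‖X a‖ ^ 2 := by
            have h1 : ∀ i, ‖w + X i‖ ^ 2
                = ‖w‖ ^ 2 + 2 * (inner ℝ w (X i) : ℝ) + ‖X i‖ ^ 2 :=
              fun i => norm_add_sq_real _ _
            simp only [h1, Finset.sum_add_distrib]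
            have h2 : ∑ i, (2 : ℝ) * inner ℝ w (X i) = 0 := by
              rw [← Finset.mul_sum, ← inner_sum, hX0, inner_zero_right, mul_zero]
            rw [h2]
            simp [Finset.sum_const, Finset.card_univ]
          rw [hexp, pow_succ]
          push_cast
          field_simp
          ring

lemma crossterm_count_tail {Ω : Type*} [Fintype Ω] (f : Ω → ℝ) (a l : ℝ) (hl : 0 ≤ l)
    (p : Ω → Prop) [DecidablePred p] (hp : ∀ ω, p ω → a ≤ f ω) :
    ((Finset.univ.filter p).card : ℝ)
      ≤ Real.exp (-(l * a)) * ∑ ω, Real.exp (l * f ω) := by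
  have h1 : ∀ ω ∈ Finset.univ.filter p, (1 : ℝ) ≤ Real.exp (l * (f ω - a)) := by
    intro ω hω
    rw [Finset.mem_filter] at hω
    refine Real.one_le_exp ?_
    have := hp ω hω.2
    nlinarith
  calc ((Finset.univ.filter p).card : ℝ)
      = ∑ _ω ∈ Finset.univ.filter p, (1 : ℝ) := by simp
    _ ≤ ∑ ω ∈ Finset.univ.filter p, Real.exp (l * (f ω - a)) := Finset.sum_le_sum h1
    _ ≤ ∑ ω, Real.exp (l * (f ω - a)) :=
        Finset.sum_le_sum_of_subset_of_nonneg (Finset.filter_subset _ _)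
          (fun _ _ _ => Real.exp_nonneg _)
    _ = Real.exp (-(l * a)) * ∑ ω, Real.exp (l * f ω) := by
        rw [Finset.mul_sum]
        refine Finset.sum_congr rfl fun ω _ => ?_
        rw [← Real.exp_add]
        congr 1
        ring



lemma crossterm_count_main {Ω : Type*} [Fintype Ω] (P Q : Ω → Prop)
    [DecidablePred P] [DecidablePred Q]
    (hPQ : ∀ ω, ¬ P ω → Q ω) (bound : ℝ)
    (hQ : ((Finset.univ.filter Q).card : ℝ) ≤ bound) :
    (Fintype.card Ω : ℝ) - bound ≤ ({ω | P ω}.ncard : ℝ) := by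
  classical
  have hnc : ({ω | P ω}.ncard : ℝ) = ((Finset.univ.filter P).card : ℝ) := by
    rw [Set.ncard_eq_toFinset_card', Set.toFinset_setOf]
  rw [hnc]
  have hsubset : Finset.univ.filter (fun ω => ¬ P ω) ⊆ Finset.univ.filter Q :=
    Finset.monotone_filter_right _ (fun ω _ h => hPQ ω h)
  have h1 : ((Finset.univ.filter (fun ω => ¬ P ω)).card : ℝ)
      ≤ ((Finset.univ.filter Q).card : ℝ) := by
    exact_mod_cast Finset.card_le_card hsubset
  have h2 : (Finset.univ.filter P).card
      + (Finset.univ.filter (fun ω => ¬ P ω)).card = Fintype.card Ω := by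
    rw [Finset.card_filter_add_card_filter_not, Finset.card_univ]
  have h2' : ((Finset.univ.filter P).card : ℝ)
      + ((Finset.univ.filter (fun ω => ¬ P ω)).card : ℝ) = (Fintype.card Ω : ℝ) := by
    exact_mod_cast h2
  linarith

end CrossTermAux

set_option maxHeartbeats 2000000

/-- **Lemma 5 (elementwise cross-term bound).**
Sampling with replacement is modeled by the uniform distribution on the finite
sample space `Fin m → Fin N`, probabilities being `#(event) / N ^ m`. -/
theorem elementwise_sampling_cross_term_bound
    (N d m : ℕ) (hN : 0 < N) (hd : 0 < d) (hdN : d ≤ N) (hm : 0 < m)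
    (δ : ℝ) (hδ : 0 < δ)
    (U : Matrix (Fin N) (Fin d) ℝ)
    (hU : Uᵀ * U = 1)
    (μS : ℝ)
    (hμS : IsGreatest
      (Set.range fun i : Fin N => (N / d : ℝ) * ∑ j, ((U * Uᵀ) j i) ^ 2) μS)
    (y : Fin N → ℝ) (hy : y ≠ 0)
    (hyperp : Uᵀ *ᵥ y = 0)
    (ymax : ℝ)
    (hymax : IsGreatest (Set.range fun i : Fin N => y i ^ 2) ymax)
    (hsize : 4 * (N * ymax / ∑ i, y i ^ 2) * Real.log (1 / δ) ≤ m)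
    (β : ℝ)
    (hβ : β = (1 + 2 * Real.sqrt (Real.log (1 / δ))) ^ 2) :
    1 - δ ≤
      (Set.ncard {ω : Fin m → Fin N |
        let UΩ : Matrix (Fin m) (Fin d) ℝ := Matrix.of fun k l => U (ω k) l
        let yΩ : Fin m → ℝ := fun k => y (ω k)
        (∑ l, (UΩᵀ *ᵥ yΩ) l ^ 2) ≤
          β * (m * d * μS / (N : ℝ) ^ 2) * ∑ i, y i ^ 2} : ℝ) / (N : ℝ) ^ m := by
  classical
  have hNR : (0 : ℝ) < N := by exact_mod_cast hN
  have hdR : (0 : ℝ) < d := by exact_mod_cast hd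
  have hmR : (0 : ℝ) < m := by exact_mod_cast hm
  have hNm : (0 : ℝ) < (N : ℝ) ^ m := by positivity
  rcases le_or_gt 1 δ with hδ1 | hδ1
  · exact le_trans (by linarith : (1 : ℝ) - δ ≤ 0)
      (div_nonneg (Nat.cast_nonneg _) hNm.le)
  set t : ℝ := Real.log (1 / δ) with ht_def
  have ht : 0 < t := Real.log_pos (by rw [lt_div_iff₀ hδ]; linarith)
  obtain ⟨i0, hi0⟩ := Function.ne_iff.mp hy
  have hy0pos : 0 < y i0 ^ 2 := by
    have := sq_abs (y i0)
    nlinarith [abs_pos.mpr hi0]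
  have hSy : 0 < ∑ i, y i ^ 2 :=
    Finset.sum_pos' (fun i _ => sq_nonneg _) ⟨i0, Finset.mem_univ _, hy0pos⟩
  -- entries of UᵀU
  have hU1 : ∀ l l' : Fin d, ∑ i, U i l * U i l' = if l = l' then 1 else 0 := by
    intro l l'
    have := congrFun (congrFun hU l) l'
    simpa [Matrix.mul_apply, Matrix.transpose_apply, Matrix.one_apply] using this
  -- row sums of the projection
  have rowsum : ∀ i : Fin N, ∑ j, ((U * Uᵀ) j i) ^ 2 = ∑ l, (U i l) ^ 2 := by
    intro i
    have happ : ∀ j, ((U * Uᵀ) j i) = ∑ l, U j l * U i l := by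
      intro j; simp [Matrix.mul_apply, Matrix.transpose_apply]
    calc ∑ j, ((U * Uᵀ) j i) ^ 2
        = ∑ j, ∑ l, ∑ l', (U j l * U i l) * (U j l' * U i l') := by
          refine Finset.sum_congr rfl fun j _ => ?_
          rw [happ j, sq, Finset.sum_mul_sum]
      _ = ∑ l, ∑ l', (U i l * U i l') * ∑ j, U j l * U j l' := by
          rw [Finset.sum_comm]
          refine Finset.sum_congr rfl fun l _ => ?_
          rw [Finset.sum_comm]
          refine Finset.sum_congr rfl fun l' _ => ?_
          rw [Finset.mul_sum]
          refine Finset.sum_congr rfl fun j _ => ?_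
          ring
      _ = ∑ l, ∑ l', (U i l * U i l') * (if l = l' then 1 else 0) := by
          refine Finset.sum_congr rfl fun l _ => Finset.sum_congr rfl fun l' _ => ?_
          rw [hU1 l l']
      _ = ∑ l, (U i l) ^ 2 := by
          refine Finset.sum_congr rfl fun l _ => ?_
          rw [Finset.sum_eq_single l]
          · simp [sq]
          · intro l' _ hne
            simp [Ne.symm hne]
          · intro h; exact absurd (Finset.mem_univ l) h
  have hμval : ∀ i : Fin N, ((N : ℝ) / d) * ∑ j, ((U * Uᵀ) j i) ^ 2 ≤ μS :=
    fun i => hμS.2 ⟨i, rfl⟩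
  have htrace : ∑ i : Fin N, ∑ l, (U i l) ^ 2 = d := by
    rw [Finset.sum_comm]
    have : ∀ l : Fin d, ∑ i, (U i l) ^ 2 = 1 := by
      intro l
      have := hU1 l l
      simpa [sq] using this
    simp [this]
  have hμ1 : (1 : ℝ) ≤ μS := by
    have hsum : ∑ i : Fin N, (((N : ℝ) / d) * ∑ j, ((U * Uᵀ) j i) ^ 2) = N := by
      simp only [rowsum, ← Finset.mul_sum, htrace]
      field_simp
    have hle : (N : ℝ) ≤ ∑ _i : Fin N, μS := by
      rw [← hsum]
      exact Finset.sum_le_sum fun i _ => hμval i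
    rw [Finset.sum_const, Finset.card_univ, Fintype.card_fin, nsmul_eq_mul] at hle
    nlinarith
  have hμpos : 0 < μS := by linarith
  have hrow_le : ∀ i : Fin N, ∑ l, (U i l) ^ 2 ≤ d * μS / N := by
    intro i
    have h := hμval i
    rw [rowsum i] at h
    rw [le_div_iff₀ hNR]
    have h2 := mul_le_mul_of_nonneg_left h hdR.le
    have h3 : (d : ℝ) * (((N : ℝ) / d) * ∑ l, (U i l) ^ 2) = N * ∑ l, (U i l) ^ 2 := by
      field_simp
    rw [h3] at h2
    nlinarith
  have hymax_le : ∀ i, y i ^ 2 ≤ ymax := fun i => hymax.2 ⟨i, rfl⟩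
  have hymax_pos : 0 < ymax := lt_of_lt_of_le hy0pos (hymax_le i0)
  -- the sampled vectors
  set X : Fin N → EuclideanSpace ℝ (Fin d) :=
    fun i => (WithLp.equiv 2 (Fin d → ℝ)).symm (fun l => U i l * y i) with hX
  have hXapp : ∀ i l, X i l = U i l * y i := by intro i l; simp [hX]
  have hX0 : ∑ a, X a = 0 := by
    apply PiLp.ext
    intro l
    rw [crossterm_euclid_sum_apply]
    have := congrFun hyperp l
    simp only [Matrix.mulVec, Matrix.transpose_apply, dotProduct, Pi.zero_apply] at this
    simp only [hXapp, PiLp.zero_apply]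
    exact this
  have hXnorm : ∀ a, ‖X a‖ ^ 2 = (∑ l, (U a l) ^ 2) * y a ^ 2 := by
    intro a
    rw [crossterm_euclid_norm_sq]
    simp only [hXapp, mul_pow, ← Finset.sum_mul]
  have hXnorm_le : ∀ a, ‖X a‖ ^ 2 ≤ (d * μS / N) * ymax := by
    intro a
    rw [hXnorm a]
    exact mul_le_mul (hrow_le a) (hymax_le a) (sq_nonneg _) (by positivity)
  have hXsum_le : ∑ a, ‖X a‖ ^ 2 ≤ (d * μS / N) * ∑ i, y i ^ 2 := by
    rw [Finset.mul_sum]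
    refine Finset.sum_le_sum fun a _ => ?_
    rw [hXnorm a]
    exact mul_le_mul_of_nonneg_right (hrow_le a) (sq_nonneg _)
  -- main quantities
  set σ2 : ℝ := (m : ℝ) * d * μS * (∑ i, y i ^ 2) / (N : ℝ) ^ 2 with hσ2
  have hσ2pos : 0 < σ2 := by rw [hσ2]; positivity
  set σ : ℝ := Real.sqrt σ2 with hσ
  have hσpos : 0 < σ := Real.sqrt_pos.mpr hσ2pos
  have hσsq : σ ^ 2 = σ2 := Real.sq_sqrt hσ2pos.le
  set l : ℝ := Real.sqrt t / σ with hldef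
  have hl : 0 ≤ l := by positivity
  have hlsq : l ^ 2 = t / σ2 := by
    rw [hldef, div_pow, Real.sq_sqrt ht.le, hσ, Real.sq_sqrt hσ2pos.le]
  set V : ℝ := σ2 / m with hV_def
  set f : (Fin m → Fin N) → ℝ := fun ω => ‖∑ k, X (ω k)‖ with hfdef
  set ρ : Fin N → Fin N → ℝ := fun a b => ‖X a - X b‖ with hρdef
  -- the size hypothesis, cleared of denominators
  have hsize' : 4 * t * ((N : ℝ) * ymax) ≤ m * ∑ i, y i ^ 2 := by
    have h := mul_le_mul_of_nonneg_right hsize hSy.le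
    have heq : 4 * ((N : ℝ) * ymax / ∑ i, y i ^ 2) * t * ∑ i, y i ^ 2
        = 4 * t * ((N : ℝ) * ymax) := by
      field_simp
    rw [heq] at h
    exact h
  have hB2 : 4 * t * ((d : ℝ) * μS / N * ymax) ≤ σ2 := by
    have key : 0 ≤ (m : ℝ) * (∑ i, y i ^ 2) - 4 * t * (N * ymax) := by linarith
    have hfac : σ2 - 4 * t * ((d : ℝ) * μS / N * ymax)
        = ((d : ℝ) * μS / (N : ℝ) ^ 2)
          * ((m : ℝ) * (∑ i, y i ^ 2) - 4 * t * (N * ymax)) := by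
      rw [hσ2]
      field_simp
    have hpos := mul_nonneg (by positivity : (0 : ℝ) ≤ (d : ℝ) * μS / (N : ℝ) ^ 2) key
    linarith
  have hρc : ∀ a b, l * ρ a b ≤ 1 := by
    intro a b
    have hB2nn : (0 : ℝ) ≤ (d : ℝ) * μS / N * ymax := by positivity
    have h2 : ∀ c, ‖X c‖ ≤ Real.sqrt ((d : ℝ) * μS / N * ymax) := by
      intro c
      rw [← Real.sqrt_sq (norm_nonneg (X c))]
      exact Real.sqrt_le_sqrt (hXnorm_le c)
    have hρB : ρ a b ≤ 2 * Real.sqrt ((d : ℝ) * μS / N * ymax) := by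
      calc ρ a b ≤ ‖X a‖ + ‖X b‖ := norm_sub_le _ _
        _ ≤ 2 * Real.sqrt ((d : ℝ) * μS / N * ymax) := by linarith [h2 a, h2 b]
    have h3 : Real.sqrt t * (2 * Real.sqrt ((d : ℝ) * μS / N * ymax)) ≤ σ := by
      have h4 : (Real.sqrt t * (2 * Real.sqrt ((d : ℝ) * μS / N * ymax))) ^ 2
          = 4 * t * ((d : ℝ) * μS / N * ymax) := by
        rw [mul_pow, mul_pow, Real.sq_sqrt ht.le, Real.sq_sqrt hB2nn]
        ring
      have h5 : (Real.sqrt t * (2 * Real.sqrt ((d : ℝ) * μS / N * ymax))) ^ 2 ≤ σ ^ 2 := by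
        rw [h4, hσsq]; exact hB2
      have h6 := Real.sqrt_le_sqrt h5
      rwa [Real.sqrt_sq (by positivity), Real.sqrt_sq hσpos.le] at h6
    rw [hldef, div_mul_eq_mul_div, div_le_one hσpos]
    calc Real.sqrt t * ρ a b
        ≤ Real.sqrt t * (2 * Real.sqrt ((d : ℝ) * μS / N * ymax)) :=
          mul_le_mul_of_nonneg_left hρB (Real.sqrt_nonneg t)
      _ ≤ σ := h3
  have hV : ∑ a, ∑ b, (ρ a b) ^ 2 ≤ 2 * (N : ℝ) ^ 2 * V := by
    have heq := crossterm_pairwise_dist_sq X hX0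
    calc ∑ a, ∑ b, (ρ a b) ^ 2 = 2 * (N : ℝ) * ∑ a, ‖X a‖ ^ 2 := heq
      _ ≤ 2 * (N : ℝ) * ((d * μS / N) * ∑ i, y i ^ 2) := by
          have h2N : (0 : ℝ) ≤ 2 * (N : ℝ) := by positivity
          exact mul_le_mul_of_nonneg_left hXsum_le h2N
      _ = 2 * (N : ℝ) ^ 2 * V := by
          rw [hV_def, hσ2]
          field_simp
  have hf : ∀ (ω : Fin m → Fin N) (k : Fin m) (a b : Fin N),
      |f (Function.update ω k a) - f (Function.update ω k b)| ≤ ρ a b := by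
    intro ω k a b
    have hupdate : ∀ c : Fin N, ∑ k', X (Function.update ω k c k')
        = X c + ∑ k' ∈ Finset.univ.erase k, X (ω k') := by
      intro c
      rw [← Finset.add_sum_erase _ _ (Finset.mem_univ k)]
      congr 1
      · rw [Function.update_self]
      · refine Finset.sum_congr rfl fun k' hk' => ?_
        rw [Function.update_of_ne (Finset.ne_of_mem_erase hk')]
    rw [hfdef]
    simp only [hupdate a, hupdate b]
    calc |‖X a + ∑ k' ∈ Finset.univ.erase k, X (ω k')‖
          - ‖X b + ∑ k' ∈ Finset.univ.erase k, X (ω k')‖|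
        ≤ ‖(X a + ∑ k' ∈ Finset.univ.erase k, X (ω k'))
          - (X b + ∑ k' ∈ Finset.univ.erase k, X (ω k'))‖ := abs_norm_sub_norm_le _ _
      _ = ‖X a - X b‖ := by rw [add_sub_add_right_eq_sub]
      _ = ρ a b := rfl
  -- mean bound
  have hEf : ∑ ω, f ω ≤ (N : ℝ) ^ m * σ := by
    have hsm := crossterm_second_moment hN X hX0 m 0
    have h2 : ∑ ω, f ω ^ 2 = (N : ℝ) ^ m * ((m : ℝ) * ((∑ a, ‖X a‖ ^ 2) / N)) := by
      simpa [hfdef] using hsm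
    have h3 : (m : ℝ) * ((∑ a, ‖X a‖ ^ 2) / N) ≤ σ2 := by
      calc (m : ℝ) * ((∑ a, ‖X a‖ ^ 2) / N)
          ≤ (m : ℝ) * (((d * μS / N) * ∑ i, y i ^ 2) / N) := by
            gcongr
        _ = σ2 := by
            rw [hσ2]
            ring
    have hcard : ((Finset.univ : Finset (Fin m → Fin N)).card : ℝ) = (N : ℝ) ^ m := by
      rw [Finset.card_univ]
      rw [show Fintype.card (Fin m → Fin N) = N ^ m by simp]
      push_cast
      rfl
    have hcs : (∑ ω, f ω) ^ 2 ≤ (N : ℝ) ^ m * ∑ ω, f ω ^ 2 := by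
      have := sq_sum_le_card_mul_sum_sq (s := (Finset.univ : Finset (Fin m → Fin N))) (f := f)
      rwa [hcard] at this
    have h4 : (∑ ω, f ω) ^ 2 ≤ ((N : ℝ) ^ m * σ) ^ 2 := by
      rw [mul_pow, hσsq]
      calc (∑ ω, f ω) ^ 2 ≤ (N : ℝ) ^ m * ∑ ω, f ω ^ 2 := hcs
        _ = (N : ℝ) ^ m * ((N : ℝ) ^ m * ((m : ℝ) * ((∑ a, ‖X a‖ ^ 2) / N))) := by rw [h2]
        _ ≤ (N : ℝ) ^ m * ((N : ℝ) ^ m * σ2) := by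
            have := mul_le_mul_of_nonneg_left h3 hNm.le
            exact mul_le_mul_of_nonneg_left this hNm.le
        _ = ((N : ℝ) ^ m) ^ 2 * σ2 := by ring
    have h5 : 0 ≤ ∑ ω, f ω := Finset.sum_nonneg fun ω _ => norm_nonneg _
    have h6 := Real.sqrt_le_sqrt h4
    rwa [Real.sqrt_sq h5, Real.sqrt_sq (by positivity)] at h6
  -- the threshold
  set a : ℝ := σ + 2 * Real.sqrt t * σ with hadef
  have hapos : 0 < a := by positivity
  -- Chernoff bound for the bad event
  have hbad : ((Finset.univ.filter (fun ω => a ≤ f ω)).card : ℝ) ≤ δ * (N : ℝ) ^ m := by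
    have hcount := crossterm_count_tail f a l hl (fun ω => a ≤ f ω) (fun ω h => h)
    have hmgf := crossterm_mgf_bound hN ρ l V hl hρc hV m f hf
    set μf : ℝ := (∑ ω', f ω') / (N : ℝ) ^ m with hμfdef
    have hμf : μf ≤ σ := by
      rw [hμfdef, div_le_iff₀ hNm]
      linarith [hEf]
    have hexp : ∑ ω, Real.exp (l * f ω)
        = Real.exp (l * μf) * ∑ ω, Real.exp (l * (f ω - μf)) := by
      rw [Finset.mul_sum]
      refine Finset.sum_congr rfl fun ω _ => ?_
      rw [← Real.exp_add]
      congr 1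
      ring
    have hK : (m : ℝ) * (3 / 4 * l ^ 2 * V) = 3 / 4 * t := by
      rw [hV_def, hlsq]
      field_simp
    have hls : l * (2 * Real.sqrt t * σ) = 2 * t := by
      rw [hldef]
      field_simp
      nlinarith [Real.mul_self_sqrt ht.le]
    calc ((Finset.univ.filter (fun ω => a ≤ f ω)).card : ℝ)
        ≤ Real.exp (-(l * a)) * ∑ ω, Real.exp (l * f ω) := hcount
      _ = Real.exp (-(l * a)) * (Real.exp (l * μf) * ∑ ω, Real.exp (l * (f ω - μf))) := by
          rw [hexp]
      _ ≤ Real.exp (-(l * a)) * (Real.exp (l * μf)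
            * ((N : ℝ) ^ m * Real.exp ((m : ℝ) * (3 / 4 * l ^ 2 * V)))) := by
          refine mul_le_mul_of_nonneg_left ?_ (Real.exp_nonneg _)
          exact mul_le_mul_of_nonneg_left hmgf (Real.exp_nonneg _)
      _ = Real.exp (-(l * a) + l * μf + (m : ℝ) * (3 / 4 * l ^ 2 * V)) * (N : ℝ) ^ m := by
          rw [Real.exp_add, Real.exp_add]
          ring
      _ ≤ Real.exp (-t) * (N : ℝ) ^ m := by
          refine mul_le_mul_of_nonneg_right (Real.exp_le_exp.mpr ?_) hNm.le
          have hlμ : l * μf ≤ l * σ := mul_le_mul_of_nonneg_left hμf hl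
          have hla : l * a = l * σ + 2 * t := by
            rw [hadef]
            rw [mul_add, hls]
          rw [hK, hla]
          linarith
      _ = δ * (N : ℝ) ^ m := by
          rw [ht_def, Real.exp_neg, Real.exp_log (by positivity)]
          rw [one_div, inv_inv]
  -- identify the event with the sub-level set of f
  have hPf : ∀ ω : Fin m → Fin N,
      (∑ l', ((Matrix.of fun k l' => U (ω k) l')ᵀ *ᵥ fun k => y (ω k)) l' ^ 2)
        = f ω ^ 2 := by
    intro ω
    rw [hfdef]
    rw [crossterm_euclid_norm_sq]
    refine Finset.sum_congr rfl fun l' _ => ?_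
    rw [crossterm_euclid_sum_apply]
    simp only [Matrix.mulVec, Matrix.transpose_apply, dotProduct, Matrix.of_apply, hXapp]
  have hset : {ω : Fin m → Fin N |
        let UΩ : Matrix (Fin m) (Fin d) ℝ := Matrix.of fun k l => U (ω k) l
        let yΩ : Fin m → ℝ := fun k => y (ω k)
        (∑ l, (UΩᵀ *ᵥ yΩ) l ^ 2) ≤
          β * (m * d * μS / (N : ℝ) ^ 2) * ∑ i, y i ^ 2}
      = {ω : Fin m → Fin N |
          f ω ^ 2 ≤ β * ((m : ℝ) * d * μS / (N : ℝ) ^ 2) * ∑ i, y i ^ 2} := by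
    ext ω
    simp only [Set.mem_setOf_eq]
    rw [hPf ω]
  rw [hset]
  -- the threshold squared
  have hasq : a ^ 2 = β * ((m : ℝ) * d * μS / (N : ℝ) ^ 2) * ∑ i, y i ^ 2 := by
    have ha1 : a = (1 + 2 * Real.sqrt t) * σ := by rw [hadef]; ring
    rw [ha1, mul_pow, hσsq, hβ, hσ2]
    ring
  have hsub : ∀ ω : Fin m → Fin N,
      ¬ (f ω ^ 2 ≤ β * ((m : ℝ) * d * μS / (N : ℝ) ^ 2) * ∑ i, y i ^ 2) → a ≤ f ω := by
    intro ω hω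
    rw [← hasq] at hω
    push_neg at hω
    by_contra hcon
    push_neg at hcon
    have hfnn : 0 ≤ f ω := norm_nonneg _
    nlinarith
  have hmain := crossterm_count_main
      (P := fun ω : Fin m → Fin N =>
        f ω ^ 2 ≤ β * ((m : ℝ) * d * μS / (N : ℝ) ^ 2) * ∑ i, y i ^ 2)
      (Q := fun ω : Fin m → Fin N => a ≤ f ω) hsub (δ * (N : ℝ) ^ m) hbad
  have hcard2 : (Fintype.card (Fin m → Fin N) : ℝ) = (N : ℝ) ^ m := by
    rw [show Fintype.card (Fin m → Fin N) = N ^ m by simp]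
    push_cast
    rfl
  rw [hcard2] at hmain
  rw [le_div_iff₀ hNm]
  nlinarith [hmain]
end
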